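/- Let p ≡ 1 (mod 8) and q ≡ 7 (mod 8) be primes with (p/q) = 1, and suppose that for the fundamental unit ε_{pq} = v + w√(pq) the number 2p(v+1) is a perfect square. Then there exist integers w₁, w₂ with w = 2w₁w₂ such that ε_{pq} = (w₁√p + w₂√q)², i.e. √ε_{pq} = w₁√p + w₂√q, and 1 = p·w₁² − q·w₂². -/

import Mathlib

noncomputable section

/-- `x + y√d` is an algebraic integer of `ℚ(√d)`:
either `x, y` are both integers, or `d ≡ 1 (mod 4)` and `x, y` are both half-integers. -/
def IsQuadInt (d : ℤ) (x y : ℚ) : Prop :=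
  (∃ a b : ℤ, x = a ∧ y = b) ∨
  (d % 4 = 1 ∧ ∃ a b : ℤ, x = a + 1/2 ∧ y = b + 1/2)

/-- `x + y√d` is the fundamental unit of the real quadratic field `ℚ(√d)`:
it is an algebraic integer of norm `±1`, greater than `1`, and minimal with
these properties. -/
def IsFundUnit (d : ℤ) (x y : ℚ) : Prop :=
  IsQuadInt d x y ∧ (x ^ 2 - d * y ^ 2 = 1 ∨ x ^ 2 - d * y ^ 2 = -1) ∧
  1 < (x : ℝ) + y * Real.sqrt d ∧
  ∀ x' y' : ℚ, IsQuadInt d x' y' →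
    (x' ^ 2 - d * y' ^ 2 = 1 ∨ x' ^ 2 - d * y' ^ 2 = -1) →
    1 < (x' : ℝ) + y' * Real.sqrt d →
    (x : ℝ) + y * Real.sqrt d ≤ (x' : ℝ) + y' * Real.sqrt d

/-- For primes `p ≡ 1 (mod 8)`, `q ≡ 7 (mod 8)` with `(p/q) = 1`, if `2p(v+1)` is a
perfect square for the fundamental unit `ε_{pq} = v + w√(pq)` of `ℚ(√(pq))`, then
there are integers `w₁, w₂` with `w = 2w₁w₂`, `ε_{pq} = (w₁√p + w₂√q)²` and
`1 = p·w₁² − q·w₂²`. -/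
theorem sqrt_eps_pq_case_2p (p q : ℕ) [Fact p.Prime] [Fact q.Prime]
    (hp : p % 8 = 1) (hq : q % 8 = 7) (hleg : legendreSym q p = 1)
    (v w : ℤ) (h : IsFundUnit (p * q) (v : ℚ) (w : ℚ))
    (hsq : ∃ n : ℕ, 2 * p * (v + 1) = (n : ℤ) ^ 2) :
    ∃ w₁ w₂ : ℤ, w = 2 * w₁ * w₂ ∧
      (v : ℝ) + (w : ℝ) * Real.sqrt (p * q) =
        ((w₁ : ℝ) * Real.sqrt p + (w₂ : ℝ) * Real.sqrt q) ^ 2 ∧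
      (1 : ℤ) = p * w₁ ^ 2 - q * w₂ ^ 2 := by
  obtain ⟨-, hnorm, hgt, -⟩ := h
  have hpP : p.Prime := Fact.out
  have hqP : q.Prime := Fact.out
  have hppos : (0:ℤ) < p := by exact_mod_cast hpP.pos
  have hqpos : (0:ℤ) < q := by exact_mod_cast hqP.pos
  -- the norm is +1
  have hN : v ^ 2 - (p * q : ℤ) * w ^ 2 = 1 := by
    rcases hnorm with h1 | h1
    · exact_mod_cast h1
    · exfalso
      have h1' : v ^ 2 - (p * q : ℤ) * w ^ 2 = -1 := by exact_mod_cast h1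
      have hsq' : IsSquare (-1 : ZMod q) := by
        refine ⟨(v : ZMod q), ?_⟩
        have h2 : ((v ^ 2 - (p * q : ℤ) * w ^ 2 : ℤ) : ZMod q) = ((-1 : ℤ) : ZMod q) := by
          rw [h1']
        push_cast at h2
        rw [ZMod.natCast_self q] at h2
        ring_nf at h2 ⊢
        linear_combination -h2
      rw [ZMod.exists_sq_eq_neg_one_iff] at hsq'
      exact hsq' (by omega)
  -- extract m with v + 1 = 2 p m²
  obtain ⟨n, hn⟩ := hsq
  have h2n : (2:ℤ) ∣ (n:ℤ) :=
    Int.prime_two.dvd_of_dvd_pow (n := 2) ⟨p * (v+1), by linarith⟩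
  obtain ⟨n₁, hn₁⟩ := h2n
  have hpprime : Prime (p:ℤ) := Nat.prime_iff_prime_int.mp hpP
  have hpn : (p:ℤ) ∣ n₁ := by
    have h1 : (p:ℤ) * (v + 1) = 2 * n₁ ^ 2 := by
      have h2 : 2 * ((p:ℤ) * (v+1)) = 2 * (2 * n₁ ^ 2) := by
        rw [hn₁] at hn; ring_nf at hn ⊢; linarith
      exact mul_left_cancel₀ two_ne_zero h2
    have hd : (p:ℤ) ∣ 2 * n₁ ^ 2 := ⟨v + 1, by linarith⟩
    refine hpprime.dvd_of_dvd_pow ((hpprime.dvd_mul.mp hd).resolve_left ?_)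
    intro hd2
    have h3 : (p:ℤ) ≤ 2 := Int.le_of_dvd (by norm_num) hd2
    have h4 : p ≤ 2 := by exact_mod_cast h3
    have := hpP.two_le
    omega
  obtain ⟨m, hm⟩ := hpn
  have hv1 : v + 1 = 2 * p * m ^ 2 := by
    have h2 : 2 * (p:ℤ) * (v + 1) = 2 * (p:ℤ) * (2 * p * m ^ 2) := by
      rw [hn₁, hm] at hn; ring_nf at hn ⊢; linarith
    exact mul_left_cancel₀ (by positivity) h2
  -- m ≠ 0
  have hm0 : m ≠ 0 := by
    intro h0
    have hv : v = -1 := by simp [h0] at hv1; omega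
    have h5 : (p * q : ℤ) * w ^ 2 = 0 := by rw [hv] at hN; linarith
    have hw : w = 0 := by
      rcases mul_eq_zero.mp h5 with h6 | h6
      · exact absurd h6 (by positivity : (0:ℤ) < (p:ℤ) * q).ne'
      · exact sq_eq_zero_iff.mp h6
    rw [hv, hw] at hgt
    norm_num at hgt
  -- key equation
  have hkey : 4 * m ^ 2 * ((p:ℤ) * m ^ 2 - 1) = q * w ^ 2 := by
    have hv' : v = 2 * p * m ^ 2 - 1 := by linarith
    have h2 : (p:ℤ) * (4 * m ^ 2 * ((p:ℤ) * m ^ 2 - 1)) = (p:ℤ) * (q * w ^ 2) := by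
      rw [hv'] at hN; linear_combination hN
    exact mul_left_cancel₀ (by positivity) h2
  have h2w : (2:ℤ) ∣ w := by
    have h4 : (2:ℤ) ∣ (q:ℤ) * w ^ 2 := ⟨2 * m ^ 2 * ((p:ℤ) * m ^ 2 - 1), by linarith⟩
    have hq2 : ¬ (2:ℤ) ∣ (q:ℤ) := by omega
    exact Int.prime_two.dvd_of_dvd_pow ((Int.prime_two.dvd_mul.mp h4).resolve_left hq2)
  obtain ⟨u, hu⟩ := h2w
  have hkey2 : m ^ 2 * ((p:ℤ) * m ^ 2 - 1) = q * u ^ 2 := by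
    have h2 : (4:ℤ) * (m ^ 2 * ((p:ℤ) * m ^ 2 - 1)) = 4 * (q * u ^ 2) := by
      rw [hu] at hkey; ring_nf at hkey ⊢; linarith
    exact mul_left_cancel₀ (by norm_num) h2
  -- gcd decomposition
  obtain ⟨g, a, b, hgne, hma, hub, hab⟩ :
      ∃ g a b : ℤ, g ≠ 0 ∧ m = g * a ∧ u = g * b ∧ IsCoprime a b := by
    have hgpos : 0 < Int.gcd m u := Int.gcd_pos_of_ne_zero_left u hm0
    have hgne : ((Int.gcd m u : ℤ)) ≠ 0 := by exact_mod_cast hgpos.ne'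
    refine ⟨Int.gcd m u, m / Int.gcd m u, u / Int.gcd m u, hgne,
      (Int.mul_ediv_cancel' (Int.gcd_dvd_left m u)).symm,
      (Int.mul_ediv_cancel' (Int.gcd_dvd_right m u)).symm, ?_⟩
    rw [Int.isCoprime_iff_gcd_eq_one]
    exact Int.gcd_div_gcd_div_gcd hgpos
  have hkey3 : a ^ 2 * ((p:ℤ) * m ^ 2 - 1) = q * b ^ 2 := by
    have h6 : g ^ 2 * (a ^ 2 * ((p:ℤ) * m ^ 2 - 1)) = g ^ 2 * ((q:ℤ) * b ^ 2) :=
      calc g ^ 2 * (a ^ 2 * ((p:ℤ) * m ^ 2 - 1))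
            = m ^ 2 * ((p:ℤ) * m ^ 2 - 1) := by rw [hma]; ring
        _ = q * u ^ 2 := hkey2
        _ = g ^ 2 * ((q:ℤ) * b ^ 2) := by rw [hub]; ring
    exact mul_left_cancel₀ (pow_ne_zero 2 hgne) h6
  -- a² = 1
  have ha2 : a ^ 2 = 1 := by
    have hdvd : a ^ 2 ∣ (q:ℤ) * b ^ 2 := ⟨(p:ℤ) * m ^ 2 - 1, by linarith [hkey3]⟩
    have hdvdq : a ^ 2 ∣ (q:ℤ) := (hab.pow (n := 2) (m := 2)).dvd_of_dvd_mul_right hdvd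
    have hna : a.natAbs ^ 2 ∣ q := by
      have h8 := Int.natAbs_dvd_natAbs.mpr hdvdq
      simpa [Int.natAbs_pow] using h8
    rcases hqP.eq_one_or_self_of_dvd _ hna with h1 | h1
    · have h9 : a.natAbs = 1 := (pow_eq_one_iff.mp h1).resolve_right (by norm_num)
      rcases Int.natAbs_eq_iff.mp h9 with h2 | h2 <;> rw [h2] <;> ring
    · exfalso
      have hk : a.natAbs ∣ q := dvd_trans (dvd_pow_self _ two_ne_zero) hna
      rcases hqP.eq_one_or_self_of_dvd _ hk with h2 | h2
      · rw [h2] at h1; simp at h1; omega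
      · rw [h2] at h1
        have h3 := hqP.two_le
        nlinarith
  have hA : (p:ℤ) * m ^ 2 - 1 = q * b ^ 2 := by
    linear_combination hkey3 - ((p:ℤ) * m ^ 2 - 1) * ha2
  refine ⟨m, a * b, ?_, ?_, ?_⟩
  · rw [hu, hub, hma]
    linear_combination (-2 * g * b) * ha2
  · have hs : Real.sqrt p ^ 2 = (p:ℝ) := Real.sq_sqrt (by positivity)
    have ht : Real.sqrt q ^ 2 = (q:ℝ) := Real.sq_sqrt (by positivity)
    have hst : Real.sqrt ((p:ℝ) * q) = Real.sqrt p * Real.sqrt q :=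
      Real.sqrt_mul (by positivity) _
    have hvR : (v:ℝ) = (p:ℝ) * (m:ℝ) ^ 2 + (q:ℝ) * ((a:ℝ) * b) ^ 2 := by
      have hz : v = p * m ^ 2 + q * (a * b) ^ 2 := by
        linear_combination hv1 + hA - (q:ℤ) * b ^ 2 * ha2
      exact_mod_cast congrArg (Int.cast : ℤ → ℝ) hz
    have hwR : (w:ℝ) = 2 * (m:ℝ) * ((a:ℝ) * b) := by
      have hz : w = 2 * m * (a * b) := by
        rw [hu, hub, hma]
        linear_combination (-2 * g * b) * ha2
      exact_mod_cast congrArg (Int.cast : ℤ → ℝ) hz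
    push_cast
    rw [hst, hvR, hwR]
    linear_combination ((m:ℝ))^2 * hs.symm + ((a:ℝ)*(b:ℝ))^2 * ht.symm
  · linear_combination -hA + (q:ℤ) * b ^ 2 * ha2
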